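/- arXiv:1803.06070 — 2 statements merged into one kernel-verified Lean document; each statement's English description precedes it below -/
import Mathlib

section
/- For every t = (t₁,…,t_p) with t_k ≥ 0 for all k, the Laplace exponent satisfies ψ(t₁,…,t_p) = ∫_0^∞ ( 1 − ∏_{k=1}^p (1 + t_k w₀ / b_k)^{−a_k} ) ρ₀(dw₀), and this quantity is finite. -/
open MeasureTheory Real Filter

/-- The Lévy measure of a generalized gamma process: the measure on `(0,∞)` with density
`w ↦ w^(-1-σ) * exp(-τ*w) / Γ(1-σ)` with respect to Lebesgue measure. -/
noncomputable def rho0 (σ τ : ℝ) : Measure ℝ :=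
  ((volume : Measure ℝ).restrict (Set.Ioi 0)).withDensity
    (fun w => ENNReal.ofReal (w ^ (-1 - σ) * Real.exp (-τ * w) / Real.Gamma (1 - σ)))

/-- The Gamma(a,b) probability measure on `(0,∞)`, with density
`x ↦ b^a x^(a−1) e^(−b x) / Γ(a)` with respect to Lebesgue measure. -/
noncomputable def gammaM (a b : ℝ) : Measure ℝ :=
  ((volume : Measure ℝ).restrict (Set.Ioi 0)).withDensity
    (fun x => ENNReal.ofReal (b ^ a * x ^ (a - 1) * Real.exp (-b * x) / Real.Gamma a))

/-- The multivariate Lévy measure `ρ` of the compound CRM with independent gamma scores: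
the pushforward of `ρ₀ ⊗ Gamma(a₁,b₁) ⊗ ⋯ ⊗ Gamma(a_p,b_p)` under
`(w₀, β₁, …, β_p) ↦ (w₀β₁, …, w₀β_p)`. -/
noncomputable def rhoC (σ τ : ℝ) (p : ℕ) (a b : Fin p → ℝ) : Measure (Fin p → ℝ) :=
  Measure.map (fun x : ℝ × (Fin p → ℝ) => fun k => x.1 * x.2 k)
    ((rho0 σ τ).prod (Measure.pi fun k => gammaM (a k) (b k)))

open Set
open scoped ENNReal

/-! ### Auxiliary lemmas -/

lemma aux_integrableOn_rpow_mul_exp {s r : ℝ} (hs : -1 < s) (hr : 0 < r) :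
    IntegrableOn (fun x : ℝ => x ^ s * Real.exp (-(r * x))) (Set.Ioi 0) := by
  refine (integrableOn_rpow_mul_exp_neg_mul_rpow hs zero_lt_one hr).congr_fun
    (fun x hx => ?_) measurableSet_Ioi
  beta_reduce
  rw [Real.rpow_one, neg_mul]

lemma gammaM_dens_measurable (a b : ℝ) :
    Measurable (fun x : ℝ =>
      ENNReal.ofReal (b ^ a * x ^ (a - 1) * Real.exp (-b * x) / Real.Gamma a)) := by
  fun_prop

/-- The Laplace transform of the Gamma(a,b) distribution. -/
lemma gammaM_exp_lintegral {a b : ℝ} (ha : 0 < a) (hb : 0 < b) {s : ℝ} (hs : 0 ≤ s) :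
    ∫⁻ x, ENNReal.ofReal (Real.exp (-(s * x))) ∂(gammaM a b)
      = ENNReal.ofReal ((1 + s / b) ^ (-a)) := by
  have hΓ : 0 < Real.Gamma a := Real.Gamma_pos_of_pos ha
  have hbs : 0 < b + s := by linarith
  rw [gammaM, lintegral_withDensity_eq_lintegral_mul _ (gammaM_dens_measurable a b)
    (by fun_prop)]
  simp only [Pi.mul_apply]
  have h1 : ∀ x ∈ Ioi (0:ℝ),
      ENNReal.ofReal (b ^ a * x ^ (a - 1) * Real.exp (-b * x) / Real.Gamma a)
        * ENNReal.ofReal (Real.exp (-(s * x)))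
      = ENNReal.ofReal (b ^ a / Real.Gamma a * (x ^ (a - 1) * Real.exp (-((b+s) * x)))) := by
    intro x hx
    have hx0 : (0:ℝ) ≤ x := le_of_lt hx
    have hxp : (0:ℝ) ≤ x ^ (a-1) := Real.rpow_nonneg hx0 _
    rw [← ENNReal.ofReal_mul (by positivity)]
    congr 1
    have : -((b+s)*x) = (-b * x) + (-(s*x)) := by ring
    rw [this, Real.exp_add]
    ring
  rw [setLIntegral_congr_fun measurableSet_Ioi h1]
  have hint : IntegrableOn
      (fun x => b ^ a / Real.Gamma a * (x ^ (a - 1) * Real.exp (-((b+s) * x)))) (Ioi 0) :=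
    (aux_integrableOn_rpow_mul_exp (by linarith) hbs).const_mul _
  rw [← ofReal_integral_eq_lintegral_ofReal hint
    ((ae_restrict_iff' measurableSet_Ioi).mpr (ae_of_all _ fun x hx => by
      have hx0 : (0:ℝ) ≤ x := le_of_lt hx
      have hxp : (0:ℝ) ≤ x ^ (a-1) := Real.rpow_nonneg hx0 _
      positivity))]
  rw [MeasureTheory.integral_const_mul, Real.integral_rpow_mul_exp_neg_mul_Ioi ha hbs]
  congr 1
  rw [div_rpow (by norm_num) hbs.le, one_rpow]
  have h2 : (1 + s / b) = (b + s) / b := by field_simp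
  rw [h2, Real.rpow_neg (by positivity), div_rpow hbs.le hb.le, inv_div]
  have hba : (0:ℝ) < b ^ a := Real.rpow_pos_of_pos hb a
  have hbsa : (0:ℝ) < (b+s) ^ a := Real.rpow_pos_of_pos hbs a
  field_simp

lemma gammaM_prob {a b : ℝ} (ha : 0 < a) (hb : 0 < b) :
    IsProbabilityMeasure (gammaM a b) := by
  constructor
  have h := gammaM_exp_lintegral ha hb (le_refl (0:ℝ))
  simp only [zero_mul, neg_zero, Real.exp_zero, ENNReal.ofReal_one, lintegral_one,
    zero_div, add_zero, Real.one_rpow, Real.rpow_neg_one] at h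
  simpa using h

lemma gammaM_compl_Ioi {a b : ℝ} : gammaM a b (Set.Ioi 0)ᶜ = 0 := by
  rw [gammaM, withDensity_apply _ measurableSet_Ioi.compl,
    Measure.restrict_restrict measurableSet_Ioi.compl, Set.compl_inter_self]
  simp

/-- Fubini for nonnegative products over a finite product measure. -/
lemma lintegral_pi_prod : ∀ {n : ℕ} (μ : Fin n → Measure ℝ), (∀ i, SigmaFinite (μ i)) →
    ∀ f : Fin n → ℝ → ℝ≥0∞, (∀ i, Measurable (f i)) →
    ∫⁻ x, ∏ i, f i (x i) ∂(Measure.pi μ) = ∏ i, ∫⁻ x, f i x ∂(μ i) := by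
  intro n
  induction n with
  | zero =>
      intro μ hμ f hf
      simp [lintegral_one]
  | succ n ih =>
      intro μ hμ f hf
      haveI := hμ
      rw [← ((measurePreserving_piFinSuccAbove μ 0).symm).lintegral_comp_emb
        (MeasurableEquiv.measurableEmbedding _)]
      simp_rw [MeasurableEquiv.piFinSuccAbove_symm_apply, Fin.insertNthEquiv,
        Equiv.coe_fn_mk, Fin.insertNth_zero, Fin.prod_univ_succ, Fin.cons_zero, Fin.cons_succ,
        Fin.zero_succAbove, cast_eq]
      have h2 := lintegral_prod_mul (μ := μ 0) (ν := Measure.pi fun j => μ j.succ)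
        (f := f 0) (g := fun y : Fin n → ℝ => ∏ i, f i.succ (y i)) (hf 0).aemeasurable
        (Finset.measurable_prod _ fun i _ => (hf i.succ).comp (measurable_pi_apply i)).aemeasurable
      rw [h2, ih _ (fun i => hμ i.succ) _ (fun i => hf i.succ)]

/-- The inner integral over the gamma scores. -/
lemma inner_eq {p : ℕ} (a b t : Fin p → ℝ) (ha : ∀ k, 0 < a k) (hb : ∀ k, 0 < b k)
    (ht : ∀ k, 0 ≤ t k) {w₀ : ℝ} (hw : 0 ≤ w₀) :
    ∫⁻ β : Fin p → ℝ, ENNReal.ofReal (1 - Real.exp (-∑ k, t k * (w₀ * β k)))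
        ∂(Measure.pi fun k => gammaM (a k) (b k))
      = ENNReal.ofReal (1 - ∏ k, (1 + t k * w₀ / b k) ^ (-(a k))) := by
  haveI : ∀ k, IsProbabilityMeasure (gammaM (a k) (b k)) := fun k => gammaM_prob (ha k) (hb k)
  haveI : ∀ k, SigmaFinite (gammaM (a k) (b k)) := fun k => inferInstance
  set PP := Measure.pi fun k => gammaM (a k) (b k) with hPP
  have hae : ∀ᵐ β : Fin p → ℝ ∂PP, ∀ k, 0 < β k := by
    refine eventually_countable_forall.mpr fun k => ?_
    rw [ae_iff]
    have heq : {β : Fin p → ℝ | ¬ 0 < β k} = Function.eval k ⁻¹' (Set.Ioi 0)ᶜ := by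
      ext β; simp [Function.eval]
    rw [heq, hPP]
    exact Measure.pi_eval_preimage_null _ gammaM_compl_Ioi
  set g : (Fin p → ℝ) → ℝ≥0∞ := fun β => ∏ k, ENNReal.ofReal (Real.exp (-(t k * w₀ * β k)))
    with hg
  have hgmeas : Measurable g := Finset.measurable_prod _ fun k _ => by fun_prop
  have hpt : ∀ β : Fin p → ℝ, (∀ k, 0 < β k) →
      ENNReal.ofReal (1 - Real.exp (-∑ k, t k * (w₀ * β k))) = 1 - g β := by
    intro β hβ
    have hexp : Real.exp (-∑ k, t k * (w₀ * β k)) = ∏ k, Real.exp (-(t k * w₀ * β k)) := by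
      rw [← Real.exp_sum]
      congr 1
      rw [← Finset.sum_neg_distrib]
      exact Finset.sum_congr rfl fun k _ => by ring
    rw [hexp, ENNReal.ofReal_sub _ (Finset.prod_nonneg fun k _ => (Real.exp_pos _).le),
      ENNReal.ofReal_one, ENNReal.ofReal_prod_of_nonneg fun k _ => (Real.exp_pos _).le]
  have hgle : ∀ᵐ β ∂PP, g β ≤ (fun _ => (1:ℝ≥0∞)) β := by
    filter_upwards [hae] with β hβ
    refine Finset.prod_le_one (fun k _ => zero_le) (fun k _ => ?_)
    rw [← ENNReal.ofReal_one]
    exact ENNReal.ofReal_le_ofReal (Real.exp_le_one_iff.mpr (by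
      have := mul_nonneg (mul_nonneg (ht k) hw) (hβ k).le
      linarith))
  have hgint : ∫⁻ β, g β ∂PP = ∏ k, ENNReal.ofReal ((1 + t k * w₀ / b k) ^ (-(a k))) := by
    have h3 := lintegral_pi_prod (fun k => gammaM (a k) (b k)) (fun k => inferInstance)
      (fun k x => ENNReal.ofReal (Real.exp (-(t k * w₀ * x)))) (fun k => by fun_prop)
    simp only [hg]
    rw [hPP, h3]
    exact Finset.prod_congr rfl fun k _ => gammaM_exp_lintegral (ha k) (hb k)
      (mul_nonneg (ht k) hw)
  calc ∫⁻ β, ENNReal.ofReal (1 - Real.exp (-∑ k, t k * (w₀ * β k))) ∂PP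
      = ∫⁻ β, ((fun _ => (1:ℝ≥0∞)) β - g β) ∂PP := by
        refine lintegral_congr_ae ?_
        filter_upwards [hae] with β hβ
        exact hpt β hβ
    _ = ∫⁻ _, (1:ℝ≥0∞) ∂PP - ∫⁻ β, g β ∂PP := by
        refine lintegral_sub hgmeas ?_ hgle
        rw [hgint]
        exact (ENNReal.prod_lt_top fun k _ => ENNReal.ofReal_lt_top).ne
    _ = ENNReal.ofReal (1 - ∏ k, (1 + t k * w₀ / b k) ^ (-(a k))) := by
        rw [lintegral_one, measure_univ, hgint,
          ← ENNReal.ofReal_prod_of_nonneg (fun k _ => Real.rpow_nonneg (by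
            have := div_nonneg (mul_nonneg (ht k) hw) (hb k).le
            linarith) _),
          ENNReal.ofReal_sub _ (Finset.prod_nonneg fun k _ => Real.rpow_nonneg (by
            have := div_nonneg (mul_nonneg (ht k) hw) (hb k).le
            linarith) _), ENNReal.ofReal_one]

/-- The key pointwise inequality used for finiteness. -/
lemma key_ineq {p : ℕ} (a b t : Fin p → ℝ) (ha : ∀ k, 0 < a k) (hb : ∀ k, 0 < b k)
    (ht : ∀ k, 0 ≤ t k) {w : ℝ} (hw : 0 ≤ w) :
    1 - ∏ k, (1 + t k * w / b k) ^ (-(a k)) ≤ (∑ k, a k * t k / b k) * w := by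
  have hx : ∀ k, 0 ≤ t k * w / b k := fun k => div_nonneg (mul_nonneg (ht k) hw) (hb k).le
  have hupos : ∀ k, 0 < (1 + t k * w / b k) ^ (-(a k)) := fun k =>
    Real.rpow_pos_of_pos (by have := hx k; linarith) _
  have hprodpos : 0 < ∏ k, (1 + t k * w / b k) ^ (-(a k)) :=
    Finset.prod_pos fun k _ => hupos k
  have h1 : 1 - ∏ k, (1 + t k * w / b k) ^ (-(a k))
      ≤ -Real.log (∏ k, (1 + t k * w / b k) ^ (-(a k))) := by
    have := Real.log_le_sub_one_of_pos hprodpos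
    linarith
  have h2 : Real.log (∏ k, (1 + t k * w / b k) ^ (-(a k)))
      = ∑ k, (-(a k)) * Real.log (1 + t k * w / b k) := by
    rw [Real.log_prod fun k _ => (hupos k).ne']
    exact Finset.sum_congr rfl fun k _ => Real.log_rpow (by have := hx k; linarith) _
  have h3 : ∑ k, a k * Real.log (1 + t k * w / b k) ≤ ∑ k, a k * (t k * w / b k) := by
    refine Finset.sum_le_sum fun k _ => ?_
    refine mul_le_mul_of_nonneg_left ?_ (ha k).le
    have := Real.log_le_sub_one_of_pos (show (0:ℝ) < 1 + t k * w / b k by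
      have := hx k; linarith)
    linarith
  have h4 : (∑ k, a k * (t k * w / b k)) = (∑ k, a k * t k / b k) * w := by
    rw [Finset.sum_mul]
    exact Finset.sum_congr rfl fun k _ => by ring
  calc 1 - ∏ k, (1 + t k * w / b k) ^ (-(a k))
      ≤ -Real.log (∏ k, (1 + t k * w / b k) ^ (-(a k))) := h1
    _ = ∑ k, a k * Real.log (1 + t k * w / b k) := by
        rw [h2, ← Finset.sum_neg_distrib]
        exact Finset.sum_congr rfl fun k _ => by ring
    _ ≤ (∑ k, a k * t k / b k) * w := h3.trans_eq h4

lemma rho0_ae_pos (σ τ : ℝ) : ∀ᵐ w ∂(rho0 σ τ), 0 < w := by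
  rw [rho0]
  exact (withDensity_absolutelyContinuous _ _).ae_le (ae_restrict_mem measurableSet_Ioi)

lemma rho0_linear_lintegral_lt_top {σ τ : ℝ} (hσ : σ < 1) (hτ : 0 < τ) (C : ℝ) :
    ∫⁻ w, ENNReal.ofReal (C * w) ∂(rho0 σ τ) < ⊤ := by
  have hΓ : 0 < Real.Gamma (1 - σ) := Real.Gamma_pos_of_pos (by linarith)
  rw [rho0, lintegral_withDensity_eq_lintegral_mul _ (by fun_prop) (by fun_prop)]
  simp only [Pi.mul_apply]
  have hle : ∀ x ∈ Ioi (0:ℝ),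
      ENNReal.ofReal (x ^ (-1 - σ) * Real.exp (-τ * x) / Real.Gamma (1 - σ))
        * ENNReal.ofReal (C * x)
      ≤ ENNReal.ofReal (|C| / Real.Gamma (1 - σ) * (x ^ (-σ) * Real.exp (-(τ * x)))) := by
    intro x hx
    have hx0 : (0:ℝ) < x := hx
    rw [← ENNReal.ofReal_mul (by positivity)]
    refine ENNReal.ofReal_le_ofReal ?_
    have hpow : x ^ (-1 - σ) * x = x ^ (-σ) := by
      rw [← Real.rpow_add_one hx0.ne' (-1 - σ)]
      congr 1
      ring
    have hrw : x ^ (-1 - σ) * Real.exp (-τ * x) / Real.Gamma (1 - σ) * (C * x)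
        = C / Real.Gamma (1 - σ) * (x ^ (-σ) * Real.exp (-(τ * x))) := by
      rw [neg_mul, ← hpow]
      field_simp
    rw [hrw]
    have h2 : C / Real.Gamma (1 - σ) ≤ |C| / Real.Gamma (1 - σ) := by
      gcongr
      exact le_abs_self C
    have h3 : (0:ℝ) ≤ x ^ (-σ) * Real.exp (-(τ * x)) := by
      have := Real.rpow_nonneg hx0.le (-σ)
      positivity
    exact mul_le_mul_of_nonneg_right h2 h3
  refine lt_of_le_of_lt (lintegral_mono_ae
    ((ae_restrict_iff' measurableSet_Ioi).mpr (ae_of_all _ hle))) ?_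
  have hint : IntegrableOn
      (fun x : ℝ => |C| / Real.Gamma (1 - σ) * (x ^ (-σ) * Real.exp (-(τ * x)))) (Ioi 0) :=
    (aux_integrableOn_rpow_mul_exp (by linarith) hτ).const_mul _
  have hnn : 0 ≤ᵐ[volume.restrict (Ioi 0)]
      (fun x : ℝ => |C| / Real.Gamma (1 - σ) * (x ^ (-σ) * Real.exp (-(τ * x)))) := by
    refine (ae_restrict_iff' measurableSet_Ioi).mpr (ae_of_all _ fun x hx => ?_)
    have hx0 : (0:ℝ) < x := hx
    have := Real.rpow_nonneg hx0.le (-σ)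
    positivity
  rw [← ofReal_integral_eq_lintegral_ofReal hint hnn]
  exact ENNReal.ofReal_lt_top

/-- For every `t = (t₁,…,t_p)` with nonnegative coordinates, the Laplace exponent
`ψ(t) = ∫ (1 − e^{−Σ_k t_k w_k}) ρ(dw)` satisfies
`ψ(t) = ∫_0^∞ (1 − ∏_k (1 + t_k w₀/b_k)^{−a_k}) ρ₀(dw₀)` and is finite. -/
theorem laplace_exponent_CCRM (σ τ : ℝ) (hσ : σ < 1) (hτ : 0 < τ) (p : ℕ) (hp : 1 ≤ p)
    (a b : Fin p → ℝ) (ha : ∀ k, 0 < a k) (hb : ∀ k, 0 < b k)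
    (t : Fin p → ℝ) (ht : ∀ k, 0 ≤ t k) :
    (∫⁻ w, ENNReal.ofReal (1 - Real.exp (-∑ k, t k * w k)) ∂(rhoC σ τ p a b)) =
      (∫⁻ w₀, ENNReal.ofReal (1 - ∏ k, (1 + t k * w₀ / b k) ^ (-(a k))) ∂(rho0 σ τ)) ∧
    (∫⁻ w, ENNReal.ofReal (1 - Real.exp (-∑ k, t k * w k)) ∂(rhoC σ τ p a b)) < ⊤ := by
  haveI : ∀ k, IsProbabilityMeasure (gammaM (a k) (b k)) := fun k => gammaM_prob (ha k) (hb k)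
  haveI : ∀ k, SigmaFinite (gammaM (a k) (b k)) := fun k => inferInstance
  have hsum : Measurable (fun w : Fin p → ℝ => ∑ k, t k * w k) :=
    Finset.measurable_sum _ fun k _ => by fun_prop
  have hfmeas : Measurable (fun w : Fin p → ℝ =>
      ENNReal.ofReal (1 - Real.exp (-∑ k, t k * w k))) :=
    (measurable_const.sub hsum.neg.exp).ennreal_ofReal
  have hmap : Measurable (fun x : ℝ × (Fin p → ℝ) => fun k => x.1 * x.2 k) :=
    measurable_pi_lambda _ fun k => measurable_fst.mul ((measurable_pi_apply k).comp
      measurable_snd)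
  have hmain : (∫⁻ w, ENNReal.ofReal (1 - Real.exp (-∑ k, t k * w k)) ∂(rhoC σ τ p a b)) =
      (∫⁻ w₀, ENNReal.ofReal (1 - ∏ k, (1 + t k * w₀ / b k) ^ (-(a k))) ∂(rho0 σ τ)) := by
    have hcomp : Measurable (fun x : ℝ × (Fin p → ℝ) =>
        ENNReal.ofReal (1 - Real.exp (-∑ k, t k * (x.1 * x.2 k)))) := hfmeas.comp hmap
    rw [rhoC, lintegral_map hfmeas hmap]
    beta_reduce
    rw [lintegral_prod _ hcomp.aemeasurable]
    refine lintegral_congr_ae ?_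
    filter_upwards [rho0_ae_pos σ τ] with w₀ hw₀
    exact inner_eq a b t ha hb ht hw₀.le
  refine ⟨hmain, ?_⟩
  rw [hmain]
  refine lt_of_le_of_lt (lintegral_mono_ae ?_)
    (rho0_linear_lintegral_lt_top hσ hτ (∑ k, a k * t k / b k))
  filter_upwards [rho0_ae_pos σ τ] with w hw
  exact ENNReal.ofReal_le_ofReal (key_ineq a b t ha hb ht hw.le)
end

section
/- Suppose σ < 0 and fix α > 0. Define f(T) = ∫_{(0,∞)^p} (1 − e^{−α ψ(2Tw₁,…,2Tw_p)}) ρ(dw) and let ρ̄ = τ^σ/(−σ) denote the (finite) total mass of ρ. Then f(T) converges to the finite positive limit ρ̄ (1 − e^{−α ρ̄}) as T → ∞. Consequently the expected number of nodes E[V_{α,T}] = α f(T) satisfies E[V_{α,T}] = Θ(1) as T → ∞. -/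
open MeasureTheory Real Filter

/-- The Laplace exponent `ψ(t) = ∫ (1 − e^{−Σ_k t_k v_k}) ρ(dv)` of the compound CRM
(a finite quantity, expressed here as a Bochner integral). -/
noncomputable def psi (σ τ : ℝ) (p : ℕ) (a b : Fin p → ℝ) (t : Fin p → ℝ) : ℝ :=
  ∫ v, (1 - Real.exp (-∑ k, t k * v k)) ∂(rhoC σ τ p a b)

/-- `∫ (1 − e^{−α ψ(2Tw₁,…,2Tw_p)}) ρ(dw)`, so that `E[V_{α,T}]` equals `α` times this. -/
noncomputable def nodesIntegral (σ τ : ℝ) (p : ℕ) (a b : Fin p → ℝ) (α T : ℝ) : ℝ :=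
  ∫ w, (1 - Real.exp (-α * psi σ τ p a b (fun k => 2 * T * w k))) ∂(rhoC σ τ p a b)


lemma aux_integrable {a r : ℝ} (ha : 0 < a) (hr : 0 < r) :
    IntegrableOn (fun x : ℝ => x ^ (a - 1) * Real.exp (-(r * x))) (Set.Ioi 0) := by
  have h := integrableOn_rpow_mul_exp_neg_mul_rpow (p := 1) (s := a - 1) (by linarith) one_pos hr
  refine h.congr_fun (fun x hx => ?_) measurableSet_Ioi
  simp only [Real.rpow_one, neg_mul]

lemma aux_lint {a r : ℝ} (ha : 0 < a) (hr : 0 < r) :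
    ∫⁻ x in Set.Ioi 0, ENNReal.ofReal (x ^ (a - 1) * Real.exp (-(r * x))) =
      ENNReal.ofReal ((1 / r) ^ a * Real.Gamma a) := by
  rw [← Real.integral_rpow_mul_exp_neg_mul_Ioi ha hr,
    ← ofReal_integral_eq_lintegral_ofReal (aux_integrable ha hr)]
  filter_upwards [ae_restrict_mem measurableSet_Ioi] with x hx
  have hx0 : (0:ℝ) < x := hx
  positivity

lemma gammaM_lint {a b : ℝ} (ha : 0 < a) (hb : 0 < b) :
    ∫⁻ x in Set.Ioi 0,
      ENNReal.ofReal (b ^ a * x ^ (a - 1) * Real.exp (-b * x) / Real.Gamma a) = 1 := by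
  have hΓ : 0 < Real.Gamma a := Real.Gamma_pos_of_pos ha
  have hconst : (0:ℝ) ≤ b ^ a / Real.Gamma a := by positivity
  calc ∫⁻ x in Set.Ioi 0,
        ENNReal.ofReal (b ^ a * x ^ (a - 1) * Real.exp (-b * x) / Real.Gamma a)
      = ∫⁻ x in Set.Ioi 0, ENNReal.ofReal (b ^ a / Real.Gamma a) *
          ENNReal.ofReal (x ^ (a - 1) * Real.exp (-(b * x))) := by
        refine setLIntegral_congr_fun measurableSet_Ioi (fun x hx => ?_)
        rw [← ENNReal.ofReal_mul hconst]
        congr 1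
        rw [neg_mul]
        ring
    _ = ENNReal.ofReal (b ^ a / Real.Gamma a) *
          ENNReal.ofReal ((1 / b) ^ a * Real.Gamma a) := by
        rw [lintegral_const_mul _ (by fun_prop), aux_lint ha hb]
    _ = 1 := by
        rw [← ENNReal.ofReal_mul hconst, ← ENNReal.ofReal_one]
        congr 1
        have h1 : (b:ℝ) ^ a ≠ 0 := (Real.rpow_pos_of_pos hb a).ne'
        have h2 : Real.Gamma a ≠ 0 := hΓ.ne'
        rw [one_div, Real.inv_rpow hb.le]
        field_simp

lemma rho0_lint {σ τ : ℝ} (hσ : σ < 0) (hτ : 0 < τ) :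
    ∫⁻ w in Set.Ioi 0,
      ENNReal.ofReal (w ^ (-1 - σ) * Real.exp (-τ * w) / Real.Gamma (1 - σ)) =
      ENNReal.ofReal (τ ^ σ / (-σ)) := by
  have hσ' : 0 < -σ := neg_pos.mpr hσ
  have hΓ : 0 < Real.Gamma (-σ) := Real.Gamma_pos_of_pos hσ'
  have hΓ1 : Real.Gamma (1 - σ) = -σ * Real.Gamma (-σ) := by
    rw [show (1 - σ) = -σ + 1 by ring, Real.Gamma_add_one hσ'.ne']
  have hconst : (0:ℝ) ≤ 1 / Real.Gamma (1 - σ) := by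
    rw [hΓ1]; positivity
  calc ∫⁻ w in Set.Ioi 0,
        ENNReal.ofReal (w ^ (-1 - σ) * Real.exp (-τ * w) / Real.Gamma (1 - σ))
      = ∫⁻ w in Set.Ioi 0, ENNReal.ofReal (1 / Real.Gamma (1 - σ)) *
          ENNReal.ofReal (w ^ (-σ - 1) * Real.exp (-(τ * w))) := by
        refine setLIntegral_congr_fun measurableSet_Ioi (fun w hw => ?_)
        rw [← ENNReal.ofReal_mul hconst]
        congr 1
        rw [show (-1 - σ : ℝ) = -σ - 1 by ring, neg_mul]
        ring
    _ = ENNReal.ofReal (1 / Real.Gamma (1 - σ)) *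
          ENNReal.ofReal ((1 / τ) ^ (-σ) * Real.Gamma (-σ)) := by
        rw [lintegral_const_mul _ (by fun_prop), aux_lint hσ' hτ]
    _ = ENNReal.ofReal (τ ^ σ / (-σ)) := by
        rw [← ENNReal.ofReal_mul hconst]
        congr 1
        rw [hΓ1, show (1/τ : ℝ) = τ⁻¹ from one_div τ, Real.inv_rpow hτ.le, Real.rpow_neg hτ.le, inv_inv]
        have h2 : Real.Gamma (-σ) ≠ 0 := hΓ.ne'
        have hσ0 : σ ≠ 0 := ne_of_lt hσ
        rw [div_mul_eq_mul_div, one_mul, div_eq_div_iff (by positivity) (by simpa using hσ'.ne')]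
        ring

lemma gammaM_univ {a b : ℝ} (ha : 0 < a) (hb : 0 < b) : gammaM a b Set.univ = 1 := by
  rw [gammaM, withDensity_apply _ MeasurableSet.univ, Measure.restrict_univ]
  exact gammaM_lint ha hb

lemma gammaM_Ioi {a b : ℝ} (ha : 0 < a) (hb : 0 < b) : gammaM a b (Set.Ioi 0) = 1 := by
  rw [gammaM, withDensity_apply _ measurableSet_Ioi,
    Measure.restrict_restrict measurableSet_Ioi, Set.inter_self]
  exact gammaM_lint ha hb

lemma rho0_univ {σ τ : ℝ} (hσ : σ < 0) (hτ : 0 < τ) :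
    rho0 σ τ Set.univ = ENNReal.ofReal (τ ^ σ / (-σ)) := by
  rw [rho0, withDensity_apply _ MeasurableSet.univ, Measure.restrict_univ]
  exact rho0_lint hσ hτ

lemma measurable_mulmap (p : ℕ) :
    Measurable (fun x : ℝ × (Fin p → ℝ) => fun k => x.1 * x.2 k) :=
  measurable_pi_lambda _ fun k => measurable_fst.mul ((measurable_pi_apply k).comp measurable_snd)

/-- For `σ < 0` and fixed `α > 0`, with `ρ̄ = τ^σ/(−σ)` the total mass of `ρ`,
`f(T) = ∫ (1 − e^{−α ψ(2Tw)}) ρ(dw) → ρ̄ (1 − e^{−α ρ̄})` as `T → ∞`, a finite positive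
limit; consequently `E[V_{α,T}] = α f(T) = Θ(1)` as `T → ∞`. -/
theorem nodes_growth_sigma_neg (σ τ : ℝ) (hσ : σ < 0) (hτ : 0 < τ) (p : ℕ) (hp : 1 ≤ p)
    (a b : Fin p → ℝ) (ha : ∀ k, 0 < a k) (hb : ∀ k, 0 < b k) (α : ℝ) (hα : 0 < α) :
    Tendsto (fun T : ℝ => nodesIntegral σ τ p a b α T) atTop
      (nhds ((τ ^ σ / (-σ)) * (1 - Real.exp (-α * (τ ^ σ / (-σ)))))) ∧
    0 < (τ ^ σ / (-σ)) * (1 - Real.exp (-α * (τ ^ σ / (-σ)))) ∧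
    ∃ c₁ c₂ T₀ : ℝ, 0 < c₁ ∧ c₁ ≤ c₂ ∧ 0 < T₀ ∧ ∀ T ≥ T₀,
      c₁ ≤ α * nodesIntegral σ τ p a b α T ∧ α * nodesIntegral σ τ p a b α T ≤ c₂ := by
  haveI : Nonempty (Fin p) := ⟨⟨0, hp⟩⟩
  have hσ' : 0 < -σ := neg_pos.mpr hσ
  set c : ℝ := τ ^ σ / (-σ) with hc
  have hcpos : 0 < c := div_pos (Real.rpow_pos_of_pos hτ σ) hσ'
  haveI hprob : ∀ k, IsProbabilityMeasure (gammaM (a k) (b k)) :=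
    fun k => ⟨gammaM_univ (ha k) (hb k)⟩
  haveI : ∀ k, SigmaFinite (gammaM (a k) (b k)) := fun k => inferInstance
  haveI : IsFiniteMeasure (rho0 σ τ) :=
    ⟨by rw [rho0_univ hσ hτ]; exact ENNReal.ofReal_lt_top⟩
  set ν : Measure (Fin p → ℝ) := Measure.pi fun k => gammaM (a k) (b k) with hν
  haveI : IsProbabilityMeasure ν := Measure.pi.instIsProbabilityMeasure _
  set ρ : Measure (Fin p → ℝ) := rhoC σ τ p a b with hρ
  have hρuniv : ρ Set.univ = ENNReal.ofReal c := by
    rw [hρ, rhoC, Measure.map_apply (measurable_mulmap p) MeasurableSet.univ,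
      Set.preimage_univ, ← Set.univ_prod_univ, Measure.prod_prod, rho0_univ hσ hτ, ← hν,
      measure_univ, mul_one]
  haveI : IsFiniteMeasure ρ := ⟨by rw [hρuniv]; exact ENNReal.ofReal_lt_top⟩
  have hctoReal : (ρ Set.univ).toReal = c := by rw [hρuniv, ENNReal.toReal_ofReal hcpos.le]
  -- a.e. all coordinates positive
  have hae : ∀ᵐ v ∂ρ, ∀ k, 0 < v k := by
    rw [hρ, rhoC]
    have hS : MeasurableSet {v : Fin p → ℝ | ∀ k, 0 < v k} := by
      have : {v : Fin p → ℝ | ∀ k, 0 < v k} = Set.pi Set.univ fun _ => Set.Ioi 0 := by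
        ext v; simp [Set.mem_pi]
      rw [this]; exact MeasurableSet.univ_pi fun _ => measurableSet_Ioi
    rw [ae_map_iff (measurable_mulmap p).aemeasurable hS]
    have h1 : (rho0 σ τ) {x : ℝ | ¬ 0 < x} = 0 := by
      have h1' : ∀ᵐ x ∂(rho0 σ τ), 0 < x := by
        have h0 : ∀ᵐ x ∂(volume.restrict (Set.Ioi (0:ℝ))), 0 < x := by
          filter_upwards [ae_restrict_mem measurableSet_Ioi] with x hx using hx
        exact h0.filter_mono (withDensity_absolutelyContinuous _ _).ae_le
      exact ae_iff.mp h1'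
    have h2 : ν {β : Fin p → ℝ | ¬ ∀ k, 0 < β k} = 0 := by
      have hSpi : ν (Set.pi Set.univ fun _ => Set.Ioi 0) = 1 := by
        rw [hν, Measure.pi_pi]
        simp [gammaM_Ioi (ha _) (hb _)]
      have hcompl : {β : Fin p → ℝ | ¬ ∀ k, 0 < β k} =
          (Set.pi Set.univ fun _ => Set.Ioi 0)ᶜ := by
        ext β; simp [Set.mem_pi]
      rw [hcompl, measure_compl (MeasurableSet.univ_pi fun _ => measurableSet_Ioi)
        (measure_ne_top _ _), hSpi, measure_univ, tsub_self]
    rw [ae_iff]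
    refine measure_mono_null (fun x hx => ?_)
      (measure_union_null (s := {x : ℝ | ¬ 0 < x} ×ˢ (Set.univ : Set (Fin p → ℝ)))
        (t := (Set.univ : Set ℝ) ×ˢ {β : Fin p → ℝ | ¬ ∀ k, 0 < β k}) ?_ ?_)
    · simp only [Set.mem_setOf_eq, Set.mem_union, Set.mem_prod, Set.mem_univ, and_true,
        true_and, Set.mem_setOf_eq] at hx ⊢
      by_contra hcon
      push_neg at hcon
      exact hx fun k => mul_pos hcon.1 (hcon.2 k)
    · rw [Measure.prod_prod, h1, zero_mul]
    · rw [Measure.prod_prod, h2, mul_zero]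
  -- measurability of psi
  have hψm : Measurable (psi σ τ p a b) := by
    have hcont : Continuous (fun x : (Fin p → ℝ) × (Fin p → ℝ) =>
        1 - Real.exp (-∑ k, x.1 k * x.2 k)) := by fun_prop
    exact (hcont.stronglyMeasurable.integral_prod_right' (ν := ρ)).measurable
  -- inner convergence
  have hpsi_tendsto : ∀ w : Fin p → ℝ, (∀ k, 0 < w k) →
      Tendsto (fun T : ℝ => psi σ τ p a b (fun k => 2 * T * w k)) atTop (nhds c) := by
    intro w hw
    have hmain := tendsto_integral_filter_of_dominated_convergence (μ := ρ) (l := atTop)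
      (F := fun (T : ℝ) (v : Fin p → ℝ) => 1 - Real.exp (-∑ k, 2 * T * w k * v k))
      (f := fun _ => (1:ℝ)) (bound := fun _ => (1:ℝ))
      (Eventually.of_forall fun T => (Continuous.aestronglyMeasurable (by fun_prop)))
      ?_ (integrable_const _) ?_
    · have h1 : ∫ _ : Fin p → ℝ, (1:ℝ) ∂ρ = c := by
        rw [integral_const, smul_eq_mul, mul_one, measureReal_def, hctoReal]
      rw [h1] at hmain
      exact hmain
    · filter_upwards [eventually_ge_atTop (0:ℝ)] with T hT
      filter_upwards [hae] with v hv
      have hs : 0 ≤ ∑ k, 2 * T * w k * v k :=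
        Finset.sum_nonneg fun k _ =>
          mul_nonneg (mul_nonneg (by linarith) (hw k).le) (hv k).le
      have he1 : Real.exp (-∑ k, 2 * T * w k * v k) ≤ 1 :=
        Real.exp_le_one_iff.mpr (by linarith)
      have he0 := Real.exp_pos (-∑ k, 2 * T * w k * v k)
      rw [Real.norm_eq_abs, abs_le]
      constructor <;> linarith
    · filter_upwards [hae] with v hv
      have hC : 0 < ∑ k, 2 * w k * v k :=
        Finset.sum_pos (fun k _ => mul_pos (mul_pos two_pos (hw k)) (hv k))
          Finset.univ_nonempty
      have hsum : Tendsto (fun T : ℝ => ∑ k, 2 * T * w k * v k) atTop atTop := by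
        have hrw : (fun T : ℝ => ∑ k, 2 * T * w k * v k) =
            fun T => (∑ k, 2 * w k * v k) * T := by
          funext T
          rw [Finset.sum_mul]
          exact Finset.sum_congr rfl fun k _ => by ring
        rw [hrw]
        exact Tendsto.const_mul_atTop hC tendsto_id
      have hexp := Real.tendsto_exp_neg_atTop_nhds_zero.comp hsum
      have := tendsto_const_nhds (α := ℝ) (x := (1:ℝ)) (f := atTop (α := ℝ)) |>.sub hexp
      simpa [Function.comp] using this
  -- outer convergence
  have houter : Tendsto (fun T : ℝ => nodesIntegral σ τ p a b α T) atTop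
      (nhds (c * (1 - Real.exp (-α * c)))) := by
    have hmain := tendsto_integral_filter_of_dominated_convergence (μ := ρ) (l := atTop)
      (F := fun (T : ℝ) (w : Fin p → ℝ) =>
        1 - Real.exp (-α * psi σ τ p a b (fun k => 2 * T * w k)))
      (f := fun _ => 1 - Real.exp (-α * c)) (bound := fun _ => (1:ℝ))
      ?_ ?_ (integrable_const _) ?_
    · have h1 : ∫ _ : Fin p → ℝ, (1 - Real.exp (-α * c)) ∂ρ =
          c * (1 - Real.exp (-α * c)) := by
        rw [integral_const, smul_eq_mul, measureReal_def, hctoReal]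
      rw [h1] at hmain
      exact hmain
    · refine Eventually.of_forall fun T => Measurable.aestronglyMeasurable ?_
      have hmw : Measurable fun w : Fin p → ℝ => (fun k => 2 * T * w k) :=
        measurable_pi_lambda _ fun k => (measurable_pi_apply k).const_mul _
      exact measurable_const.sub (((hψm.comp hmw).const_mul (-α)).exp)
    · filter_upwards [eventually_ge_atTop (0:ℝ)] with T hT
      filter_upwards [hae] with w hw
      have hψnn : 0 ≤ psi σ τ p a b (fun k => 2 * T * w k) := by
        refine integral_nonneg_of_ae ?_
        filter_upwards [hae] with v hv
        have hs : 0 ≤ ∑ k, 2 * T * w k * v k :=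
          Finset.sum_nonneg fun k _ =>
            mul_nonneg (mul_nonneg (by linarith) (hw k).le) (hv k).le
        have he1 : Real.exp (-∑ k, 2 * T * w k * v k) ≤ 1 :=
          Real.exp_le_one_iff.mpr (by linarith)
        have h := Real.exp_pos (-∑ k, 2 * T * w k * v k)
        show (0:ℝ) ≤ 1 - Real.exp (-∑ k, 2 * T * w k * v k)
        linarith
      have hargle : -α * psi σ τ p a b (fun k => 2 * T * w k) ≤ 0 := by nlinarith
      have he1 : Real.exp (-α * psi σ τ p a b (fun k => 2 * T * w k)) ≤ 1 :=
        Real.exp_le_one_iff.mpr hargle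
      have he0 := Real.exp_pos (-α * psi σ τ p a b (fun k => 2 * T * w k))
      rw [Real.norm_eq_abs, abs_le]
      constructor <;> linarith
    · filter_upwards [hae] with w hw
      have h := hpsi_tendsto w hw
      have hexp := (Real.continuous_exp.tendsto _).comp (h.const_mul (-α))
      exact tendsto_const_nhds.sub hexp
  refine ⟨houter, ?_, ?_⟩
  · have hlt : Real.exp (-α * c) < 1 := Real.exp_lt_one_iff.mpr (by nlinarith)
    exact mul_pos hcpos (by linarith)
  · set L : ℝ := c * (1 - Real.exp (-α * c)) with hL
    have hLpos : 0 < L := by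
      have hlt : Real.exp (-α * c) < 1 := Real.exp_lt_one_iff.mpr (by nlinarith)
      exact mul_pos hcpos (by linarith)
    have h2 : Tendsto (fun T : ℝ => α * nodesIntegral σ τ p a b α T) atTop
        (nhds (α * L)) := houter.const_mul α
    have hev : ∀ᶠ T in atTop,
        α * nodesIntegral σ τ p a b α T ∈ Set.Icc (α * L / 2) (α * L * 2) :=
      h2 (Icc_mem_nhds (by nlinarith) (by nlinarith))
    obtain ⟨T₀', hT₀'⟩ := eventually_atTop.mp hev
    refine ⟨α * L / 2, α * L * 2, max T₀' 1, by positivity, by nlinarith, ?_, fun T hT => ?_⟩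
    · exact lt_of_lt_of_le one_pos (le_max_right _ _)
    · have h := hT₀' T (le_trans (le_max_left _ _) hT)
      exact ⟨h.1, h.2⟩
end
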